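/- For every real R, E_e(R,Q) = max over ρ ∈ [0,1] of { E₀(ρ,Q) − ρ·R }; moreover the minimum defining E_e(R,Q) is attained at a unique joint distribution, namely T_ρ∘V_ρ for some ρ ∈ [0,1] achieving the maximum. -/

import Mathlib

open scoped BigOperators
open Filter Topology

/-- `f` is a probability mass function on a finite alphabet. -/
def IsPMF {α : Type*} [Fintype α] (f : α → ℝ) : Prop :=
  (∀ a, 0 ≤ f a) ∧ ∑ a, f a = 1

/-- `P` is a discrete memoryless channel from `𝓧` to `𝓨`. -/
def IsChannel {𝓧 𝓨 : Type*} [Fintype 𝓧] [Fintype 𝓨] (P : 𝓧 → 𝓨 → ℝ) : Prop :=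
  ∀ x, IsPMF (P x)

/-- `V` is a conditional pmf on `𝓧` given `𝓨`. -/
def IsCondPMF {𝓧 𝓨 : Type*} [Fintype 𝓧] [Fintype 𝓨] (V : 𝓨 → 𝓧 → ℝ) : Prop :=
  ∀ y, IsPMF (V y)

/-- one term `s·log(s/t)` of a KL divergence, with the conventions
    `0·log(0/t) = 0` and `s·log(s/0) = +∞` for `s > 0`. -/
noncomputable def klTerm (s t : ℝ) : EReal :=
  if s = 0 then 0 else if t = 0 then ⊤ else ((s * Real.log (s / t) : ℝ) : EReal)

/-- `D(T∘V ‖ Q∘P)`. -/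
noncomputable def DQP {𝓧 𝓨 : Type*} [Fintype 𝓧] [Fintype 𝓨]
    (T : 𝓨 → ℝ) (V : 𝓨 → 𝓧 → ℝ) (Q : 𝓧 → ℝ) (P : 𝓧 → 𝓨 → ℝ) : EReal :=
  ∑ y, ∑ x, klTerm (T y * V y x) (Q x * P x y)

/-- `D(T∘V ‖ T×Q)`. -/
noncomputable def DTQ {𝓧 𝓨 : Type*} [Fintype 𝓧] [Fintype 𝓨]
    (T : 𝓨 → ℝ) (V : 𝓨 → 𝓧 → ℝ) (Q : 𝓧 → ℝ) : EReal :=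
  ∑ y, ∑ x, klTerm (T y * V y x) (T y * Q x)

/-- Gallager's function `E₀(ρ,Q)` (for `ρ > −1`). -/
noncomputable def E0 {𝓧 𝓨 : Type*} [Fintype 𝓧] [Fintype 𝓨]
    (ρ : ℝ) (Q : 𝓧 → ℝ) (P : 𝓧 → 𝓨 → ℝ) : ℝ :=
  - Real.log (∑ y, (∑ x, Q x * P x y ^ (1 / (1 + ρ))) ^ (1 + ρ))

/-- The joint distribution `T_ρ∘V_ρ` on `𝓧 × 𝓨` (for `ρ > −1`). -/
noncomputable def Jrho {𝓧 𝓨 : Type*} [Fintype 𝓧] [Fintype 𝓨]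
    (ρ : ℝ) (Q : 𝓧 → ℝ) (P : 𝓧 → 𝓨 → ℝ) (x : 𝓧) (y : 𝓨) : ℝ :=
  Q x * P x y ^ (1 / (1 + ρ)) * (∑ a, Q a * P a y ^ (1 / (1 + ρ))) ^ ρ /
    ∑ y', (∑ a, Q a * P a y' ^ (1 / (1 + ρ))) ^ (1 + ρ)

/-- `max_{x : Q(x) > 0} P(y|x)`. -/
noncomputable def maxP {𝓧 𝓨 : Type*} (Q : 𝓧 → ℝ) (P : 𝓧 → 𝓨 → ℝ) (y : 𝓨) : ℝ :=
  ⨆ x : {x // 0 < Q x}, P x.1 y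

/-- `E₀(−1,Q) = −log ∑_y max_{x : Q(x)>0} P(y|x)`. -/
noncomputable def E0m1 {𝓧 𝓨 : Type*} [Fintype 𝓧] [Fintype 𝓨]
    (Q : 𝓧 → ℝ) (P : 𝓧 → 𝓨 → ℝ) : ℝ :=
  - Real.log (∑ y, maxP Q P y)

/-- `E₀(ρ,Q)` extended to `ρ = −1`. -/
noncomputable def E0full {𝓧 𝓨 : Type*} [Fintype 𝓧] [Fintype 𝓨]
    (ρ : ℝ) (Q : 𝓧 → ℝ) (P : 𝓧 → 𝓨 → ℝ) : ℝ :=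
  if ρ = -1 then E0m1 Q P else E0 ρ Q P

/-- `T_{−1}(y) ∝ max_{a : Q(a)>0} P(y|a)`. -/
noncomputable def Tm1 {𝓧 𝓨 : Type*} [Fintype 𝓧] [Fintype 𝓨]
    (Q : 𝓧 → ℝ) (P : 𝓧 → 𝓨 → ℝ) (y : 𝓨) : ℝ :=
  maxP Q P y / ∑ y', maxP Q P y'

/-- `V` is admissible at `ρ = −1`: `V(x|y) = 0` for every `x` outside
    `argmax_{a : Q(a)>0} P(y|a)`. -/
def AdmissibleAtM1 {𝓧 𝓨 : Type*} [Fintype 𝓧] [Fintype 𝓨]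
    (Q : 𝓧 → ℝ) (P : 𝓧 → 𝓨 → ℝ) (V : 𝓨 → 𝓧 → ℝ) : Prop :=
  ∀ y x, ¬ (0 < Q x ∧ ∀ a, 0 < Q a → P a y ≤ P x y) → V y x = 0

/-- the error exponent `E_e(R,Q)`. -/
noncomputable def Ee {𝓧 𝓨 : Type*} [Fintype 𝓧] [Fintype 𝓨]
    (R : ℝ) (Q : 𝓧 → ℝ) (P : 𝓧 → 𝓨 → ℝ) : EReal :=
  sInf {v | ∃ T : 𝓨 → ℝ, ∃ V : 𝓨 → 𝓧 → ℝ, IsPMF T ∧ IsCondPMF V ∧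
    v = DQP T V Q P + max (DTQ T V Q - (R : EReal)) 0}

/-- the ML correct-decoding exponent `E_c^{ML}(R,Q)`. -/
noncomputable def EcML {𝓧 𝓨 : Type*} [Fintype 𝓧] [Fintype 𝓨]
    (R : ℝ) (Q : 𝓧 → ℝ) (P : 𝓧 → 𝓨 → ℝ) : EReal :=
  sInf {v | ∃ T : 𝓨 → ℝ, ∃ V : 𝓨 → 𝓧 → ℝ, IsPMF T ∧ IsCondPMF V ∧
    v = DQP T V Q P + max ((R : EReal) - DTQ T V Q) 0}

/-- the strict correct-decoding exponent `E_c(R,Q)` (`+∞` if infeasible). -/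
noncomputable def Ec {𝓧 𝓨 : Type*} [Fintype 𝓧] [Fintype 𝓨]
    (R : ℝ) (Q : 𝓧 → ℝ) (P : 𝓧 → 𝓨 → ℝ) : EReal :=
  sInf {v | ∃ T : 𝓨 → ℝ, ∃ V : 𝓨 → 𝓧 → ℝ, IsPMF T ∧ IsCondPMF V ∧
    (R : EReal) ≤ DTQ T V Q ∧ v = DQP T V Q P}

/-- the mutual information `I(Q∘P)`. -/
noncomputable def MI {𝓧 𝓨 : Type*} [Fintype 𝓧] [Fintype 𝓨]
    (Q : 𝓧 → ℝ) (P : 𝓧 → 𝓨 → ℝ) : ℝ :=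
  ∑ x, ∑ y, if Q x * P x y = 0 then 0
    else Q x * P x y * Real.log (P x y / ∑ a, Q a * P a y)

/-- the capacity `C(Z)` of the channel restricted to input letters in `Z`. -/
noncomputable def capacity {𝓧 𝓨 : Type*} [Fintype 𝓧] [Fintype 𝓨]
    (P : 𝓧 → 𝓨 → ℝ) (Z : Set 𝓧) : ℝ :=
  sSup {c | ∃ Q' : 𝓧 → ℝ, IsPMF Q' ∧ (∀ x, 0 < Q' x → x ∈ Z) ∧ c = MI Q' P}

/-- `R_{−1}^{−}(Q)`. -/
noncomputable def Rm1minus {𝓧 𝓨 : Type*} [Fintype 𝓧] [Fintype 𝓨]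
    (Q : 𝓧 → ℝ) (P : 𝓧 → 𝓨 → ℝ) : EReal :=
  sInf {v | ∃ V : 𝓨 → 𝓧 → ℝ, IsCondPMF V ∧ AdmissibleAtM1 Q P V ∧
    v = DTQ (Tm1 Q P) V Q}

/-- `R_{−1}^{+}(Q)`. -/
noncomputable def Rm1plus {𝓧 𝓨 : Type*} [Fintype 𝓧] [Fintype 𝓨]
    (Q : 𝓧 → ℝ) (P : 𝓧 → 𝓨 → ℝ) : EReal :=
  sSup {v | ∃ V : 𝓨 → 𝓧 → ℝ, IsCondPMF V ∧ AdmissibleAtM1 Q P V ∧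
    v = DTQ (Tm1 Q P) V Q}

/-- `F_ρ(T∘V, Q) = D(T∘V‖Q∘P) + ρ·D(T∘V‖T×Q)`. -/
noncomputable def Frho {𝓧 𝓨 : Type*} [Fintype 𝓧] [Fintype 𝓨]
    (ρ : ℝ) (T : 𝓨 → ℝ) (V : 𝓨 → 𝓧 → ℝ) (Q : 𝓧 → ℝ) (P : 𝓧 → 𝓨 → ℝ) : EReal :=
  DQP T V Q P + (ρ : EReal) * DTQ T V Q

/-- the unconstrained penalized minimum
    `min_{T,V} { D(T∘V‖Q∘P) + ρ·(D(T∘V‖T×Q) − R) }`. -/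
noncomputable def penMin {𝓧 𝓨 : Type*} [Fintype 𝓧] [Fintype 𝓨]
    (Q : 𝓧 → ℝ) (P : 𝓧 → 𝓨 → ℝ) (R ρ : ℝ) : EReal :=
  sInf {v | ∃ T : 𝓨 → ℝ, ∃ V : 𝓨 → 𝓧 → ℝ, IsPMF T ∧ IsCondPMF V ∧
    v = DQP T V Q P + (ρ : EReal) * (DTQ T V Q - (R : EReal))}

/-- the support-constrained penalized minimum
    `min_{T,V : supp(V) ⊆ supp(Q)} { D(T∘V‖Q∘P) − ρ·(R − D(T∘V‖T×Q)) }`. -/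
noncomputable def penMinS {𝓧 𝓨 : Type*} [Fintype 𝓧] [Fintype 𝓨]
    (Q : 𝓧 → ℝ) (P : 𝓧 → 𝓨 → ℝ) (R ρ : ℝ) : EReal :=
  sInf {v | ∃ T : 𝓨 → ℝ, ∃ V : 𝓨 → 𝓧 → ℝ, IsPMF T ∧ IsCondPMF V ∧
    (∀ y x, Q x = 0 → V y x = 0) ∧
    v = DQP T V Q P - (ρ : EReal) * ((R : EReal) - DTQ T V Q)}


noncomputable def rterm (s t : ℝ) : ℝ := if s = 0 then 0 else s * Real.log (s / t)

lemma rterm_zero (t : ℝ) : rterm 0 t = 0 := if_pos rfl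

lemma rterm_self (s : ℝ) : rterm s s = 0 := by
  unfold rterm; split_ifs with h
  · rfl
  · rw [div_self h, Real.log_one, mul_zero]

lemma rterm_of_ne {s : ℝ} (t : ℝ) (hs : s ≠ 0) : rterm s t = s * Real.log (s / t) := if_neg hs

lemma rterm_mul_left {c s t : ℝ} (hc : c ≠ 0) : rterm (c*s) (c*t) = c * rterm s t := by
  unfold rterm
  rcases eq_or_ne s 0 with h|h
  · simp [h]
  · rw [if_neg (mul_ne_zero hc h), if_neg h, mul_div_mul_left _ _ hc]; ring

lemma rterm_ge {a b : ℝ} (ha : 0 ≤ a) (hb : 0 ≤ b) (hab : a ≠ 0 → b ≠ 0) :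
    a - b ≤ rterm a b := by
  rcases eq_or_ne a 0 with h|h
  · simp [h, rterm_zero, hb]
  · have ha' : 0 < a := ha.lt_of_ne (Ne.symm h)
    have hb' : 0 < b := hb.lt_of_ne (Ne.symm (hab h))
    rw [rterm_of_ne _ h]
    have h1 : Real.log (b/a) ≤ b/a - 1 := Real.log_le_sub_one_of_pos (div_pos hb' ha')
    have h2 : Real.log (a/b) = - Real.log (b/a) := by
      rw [← Real.log_inv, inv_div]
    have h3 : a * Real.log (b/a) ≤ a * (b/a - 1) :=
      mul_le_mul_of_nonneg_left h1 ha
    have h4 : a * (b/a - 1) = b - a := by field_simp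
    nlinarith [h3]

lemma rterm_eq_cases {a b : ℝ} (ha : 0 ≤ a) (hb : 0 ≤ b) (hab : a ≠ 0 → b ≠ 0)
    (heq : rterm a b = a - b) : a = b := by
  rcases eq_or_ne a 0 with h|h
  · rw [h, rterm_zero] at heq; linarith
  · have ha' : 0 < a := ha.lt_of_ne (Ne.symm h)
    have hb' : 0 < b := hb.lt_of_ne (Ne.symm (hab h))
    by_contra hne
    have hba : b/a ≠ 1 := by
      intro hh
      rw [div_eq_one_iff_eq (ne_of_gt ha')] at hh
      exact hne hh.symm
    have h1 : Real.log (b/a) < b/a - 1 := Real.log_lt_sub_one_of_pos (div_pos hb' ha') hba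
    have h2 : Real.log (a/b) = - Real.log (b/a) := by rw [← Real.log_inv, inv_div]
    rw [rterm_of_ne _ h, h2] at heq
    have h3 : a * Real.log (b/a) < a * (b/a - 1) := by
      exact mul_lt_mul_of_pos_left h1 ha'
    have h4 : a * (b/a - 1) = b - a := by field_simp
    nlinarith [h3]

lemma gibbs_nonneg {ι : Type*} [Fintype ι] {a b : ι → ℝ}
    (ha : ∀ i, 0 ≤ a i) (hb : ∀ i, 0 ≤ b i) (hab : ∀ i, a i ≠ 0 → b i ≠ 0)
    (hsa : ∑ i, a i = 1) (hsb : ∑ i, b i ≤ 1) :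
    0 ≤ ∑ i, rterm (a i) (b i) := by
  have h1 : ∑ i, (a i - b i) ≤ ∑ i, rterm (a i) (b i) :=
    Finset.sum_le_sum fun i _ => rterm_ge (ha i) (hb i) (hab i)
  rw [Finset.sum_sub_distrib, hsa] at h1
  linarith

lemma gibbs_eq {ι : Type*} [Fintype ι] {a b : ι → ℝ}
    (ha : ∀ i, 0 ≤ a i) (hb : ∀ i, 0 ≤ b i) (hab : ∀ i, a i ≠ 0 → b i ≠ 0)
    (hsa : ∑ i, a i = 1) (hsb : ∑ i, b i = 1)
    (h0 : ∑ i, rterm (a i) (b i) = 0) : ∀ i, a i = b i := by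
  have hle : ∀ i ∈ Finset.univ, a i - b i ≤ rterm (a i) (b i) :=
    fun i _ => rterm_ge (ha i) (hb i) (hab i)
  have hsum : ∑ i, (a i - b i) = ∑ i, rterm (a i) (b i) := by
    rw [h0, Finset.sum_sub_distrib, hsa, hsb]; ring
  have := (Finset.sum_eq_sum_iff_of_le hle).mp hsum
  intro i
  exact rterm_eq_cases (ha i) (hb i) (hab i) ((this i (Finset.mem_univ i)).symm)

section ChannelAux
variable {𝓧 𝓨 : Type*} [Fintype 𝓧] [Fintype 𝓨]

noncomputable def dqpR (T : 𝓨 → ℝ) (V : 𝓨 → 𝓧 → ℝ) (Q : 𝓧 → ℝ) (P : 𝓧 → 𝓨 → ℝ) : ℝ :=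
  ∑ y, ∑ x, rterm (T y * V y x) (Q x * P x y)

noncomputable def dtqR (T : 𝓨 → ℝ) (V : 𝓨 → 𝓧 → ℝ) (Q : 𝓧 → ℝ) : ℝ :=
  ∑ y, ∑ x, rterm (T y * V y x) (T y * Q x)

def ACond (Q : 𝓧 → ℝ) (P : 𝓧 → 𝓨 → ℝ) (T : 𝓨 → ℝ) (V : 𝓨 → 𝓧 → ℝ) : Prop :=
  ∀ y x, Q x * P x y = 0 → T y * V y x = 0

noncomputable def Af (ρ : ℝ) (Q : 𝓧 → ℝ) (P : 𝓧 → 𝓨 → ℝ) (y : 𝓨) : ℝ :=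
  ∑ x, Q x * P x y ^ (1/(1+ρ))

noncomputable def Sf (ρ : ℝ) (Q : 𝓧 → ℝ) (P : 𝓧 → 𝓨 → ℝ) : ℝ :=
  ∑ y, Af ρ Q P y ^ (1+ρ)

noncomputable def Tr (ρ : ℝ) (Q : 𝓧 → ℝ) (P : 𝓧 → 𝓨 → ℝ) (y : 𝓨) : ℝ :=
  Af ρ Q P y ^ (1+ρ) / Sf ρ Q P

noncomputable def Vr (ρ : ℝ) (Q : 𝓧 → ℝ) (P : 𝓧 → 𝓨 → ℝ) (y : 𝓨) (x : 𝓧) : ℝ :=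
  if Af ρ Q P y = 0 then Q x else Q x * P x y ^ (1/(1+ρ)) / Af ρ Q P y

variable {Q : 𝓧 → ℝ} {P : 𝓧 → 𝓨 → ℝ}

lemma E0_eq (ρ : ℝ) : E0 ρ Q P = - Real.log (Sf ρ Q P) := rfl

lemma Jrho_def (ρ : ℝ) (x : 𝓧) (y : 𝓨) :
    Jrho ρ Q P x y = Q x * P x y ^ (1/(1+ρ)) * Af ρ Q P y ^ ρ / Sf ρ Q P := rfl

section Basic
variable (hQ : IsPMF Q) (hP : IsChannel P) {ρ : ℝ} (hρ : -1 < ρ)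

lemma one_add_pos (hρ : -1 < ρ) : (0:ℝ) < 1 + ρ := by linarith

lemma exp_pos' (hρ : -1 < ρ) : (0:ℝ) < 1/(1+ρ) := by
  have := one_add_pos hρ; positivity

lemma Af_nonneg (hQ : IsPMF Q) (hP : IsChannel P) (ρ : ℝ) (y : 𝓨) : 0 ≤ Af ρ Q P y :=
  Finset.sum_nonneg fun x _ => mul_nonneg (hQ.1 x) (Real.rpow_nonneg ((hP x).1 y) _)

lemma Af_pos (hQ : IsPMF Q) (hP : IsChannel P) (hρ : -1 < ρ) {x : 𝓧} {y : 𝓨}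
    (hq : Q x ≠ 0) (hp : P x y ≠ 0) : 0 < Af ρ Q P y := by
  refine Finset.sum_pos' (fun a _ => mul_nonneg (hQ.1 a) (Real.rpow_nonneg ((hP a).1 y) _)) ?_
  refine ⟨x, Finset.mem_univ x, ?_⟩
  exact mul_pos ((hQ.1 x).lt_of_ne (Ne.symm hq))
    (Real.rpow_pos_of_pos (((hP x).1 y).lt_of_ne (Ne.symm hp)) _)

lemma Af_zero_term (hQ : IsPMF Q) (hP : IsChannel P) {ρ : ℝ} {y : 𝓨}
    (h : Af ρ Q P y = 0) (x : 𝓧) : Q x * P x y ^ (1/(1+ρ)) = 0 := by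
  have := (Finset.sum_eq_zero_iff_of_nonneg
    (fun a (_ : a ∈ Finset.univ) => mul_nonneg (hQ.1 a) (Real.rpow_nonneg ((hP a).1 y) _))).mp h
  exact this x (Finset.mem_univ x)

lemma Sf_pos (hQ : IsPMF Q) (hP : IsChannel P) (hρ : -1 < ρ) : 0 < Sf ρ Q P := by
  have hx : ∃ x, Q x ≠ 0 := by
    by_contra h
    push_neg at h
    have := hQ.2
    simp [h] at this
  obtain ⟨x, hx⟩ := hx
  have hy : ∃ y, P x y ≠ 0 := by
    by_contra h
    push_neg at h
    have := (hP x).2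
    simp [h] at this
  obtain ⟨y, hy⟩ := hy
  refine Finset.sum_pos' (fun a _ => Real.rpow_nonneg (Af_nonneg hQ hP ρ a) _) ?_
  exact ⟨y, Finset.mem_univ y, Real.rpow_pos_of_pos (Af_pos hQ hP hρ hx hy) _⟩

lemma Jrho_nonneg (hQ : IsPMF Q) (hP : IsChannel P) (ρ : ℝ) (x : 𝓧) (y : 𝓨) :
    0 ≤ Jrho ρ Q P x y := by
  rw [Jrho_def]
  have h1 : 0 ≤ Q x * P x y ^ (1/(1+ρ)) :=
    mul_nonneg (hQ.1 x) (Real.rpow_nonneg ((hP x).1 y) _)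
  have h2 : 0 ≤ Af ρ Q P y ^ ρ := Real.rpow_nonneg (Af_nonneg hQ hP ρ y) _
  have h3 : (0:ℝ) ≤ Sf ρ Q P := Finset.sum_nonneg fun a _ =>
    Real.rpow_nonneg (Af_nonneg hQ hP ρ a) _
  positivity

lemma Jrho_eq_zero (hQ : IsPMF Q) (hP : IsChannel P) (hρ : -1 < ρ) {x : 𝓧} {y : 𝓨}
    (h : Q x * P x y = 0) : Jrho ρ Q P x y = 0 := by
  rw [Jrho_def]
  rcases mul_eq_zero.mp h with h|h
  · rw [h]; ring
  · rw [h, Real.zero_rpow (ne_of_gt (exp_pos' hρ))]; ring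

lemma Jrho_pos (hQ : IsPMF Q) (hP : IsChannel P) (hρ : -1 < ρ) {x : 𝓧} {y : 𝓨}
    (hq : Q x ≠ 0) (hp : P x y ≠ 0) : 0 < Jrho ρ Q P x y := by
  rw [Jrho_def]
  have h1 : 0 < Q x := (hQ.1 x).lt_of_ne (Ne.symm hq)
  have h2 : 0 < P x y ^ (1/(1+ρ)) :=
    Real.rpow_pos_of_pos (((hP x).1 y).lt_of_ne (Ne.symm hp)) _
  have h3 : 0 < Af ρ Q P y ^ ρ := Real.rpow_pos_of_pos (Af_pos hQ hP hρ hq hp) _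
  have h4 : 0 < Sf ρ Q P := Sf_pos hQ hP hρ
  positivity

lemma Vr_eq (hQ : IsPMF Q) (hP : IsChannel P) (hρ : -1 < ρ) {x : 𝓧} {y : 𝓨}
    (hA : Af ρ Q P y ≠ 0) : Vr ρ Q P y x = Q x * P x y ^ (1/(1+ρ)) / Af ρ Q P y := if_neg hA

lemma Tr_Vr_eq_Jrho (hQ : IsPMF Q) (hP : IsChannel P) (hρ : -1 < ρ) (x : 𝓧) (y : 𝓨) :
    Tr ρ Q P y * Vr ρ Q P y x = Jrho ρ Q P x y := by
  rcases eq_or_ne (Af ρ Q P y) 0 with hA|hA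
  · rw [Tr, hA, Real.zero_rpow (ne_of_gt (one_add_pos hρ)), Jrho_def]
    have := Af_zero_term hQ hP hA x
    rw [this]
    ring
  · have hApos : 0 < Af ρ Q P y := (Af_nonneg hQ hP ρ y).lt_of_ne (Ne.symm hA)
    rw [Tr, Vr_eq hQ hP hρ hA, Jrho_def]
    have hpow : Af ρ Q P y ^ (1+ρ) = Af ρ Q P y * Af ρ Q P y ^ ρ := by
      rw [Real.rpow_add hApos, Real.rpow_one]
    rw [div_mul_div_comm, hpow]
    rw [show Af ρ Q P y * Af ρ Q P y ^ ρ * (Q x * P x y ^ (1/(1+ρ)))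
        = Q x * P x y ^ (1/(1+ρ)) * Af ρ Q P y ^ ρ * Af ρ Q P y by ring]
    exact mul_div_mul_right _ _ hA

lemma sum_Vr (hQ : IsPMF Q) (hP : IsChannel P) (hρ : -1 < ρ) (y : 𝓨) :
    ∑ x, Vr ρ Q P y x = 1 := by
  rcases eq_or_ne (Af ρ Q P y) 0 with hA|hA
  · simp only [Vr, hA, if_pos rfl]
    exact hQ.2
  · simp only [Vr, if_neg hA]
    rw [← Finset.sum_div, ← Af]
    exact div_self hA

lemma Vr_nonneg (hQ : IsPMF Q) (hP : IsChannel P) (ρ : ℝ) (y : 𝓨) (x : 𝓧) :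
    0 ≤ Vr ρ Q P y x := by
  unfold Vr
  split_ifs with h
  · exact hQ.1 x
  · exact div_nonneg (mul_nonneg (hQ.1 x) (Real.rpow_nonneg ((hP x).1 y) _))
      (Af_nonneg hQ hP ρ y)

lemma Vr_condPMF (hQ : IsPMF Q) (hP : IsChannel P) (hρ : -1 < ρ) : IsCondPMF (Vr ρ Q P) :=
  fun y => ⟨Vr_nonneg hQ hP ρ y, sum_Vr hQ hP hρ y⟩

lemma Tr_nonneg (hQ : IsPMF Q) (hP : IsChannel P) (ρ : ℝ) (y : 𝓨) : 0 ≤ Tr ρ Q P y :=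
  div_nonneg (Real.rpow_nonneg (Af_nonneg hQ hP ρ y) _)
    (Finset.sum_nonneg fun a _ => Real.rpow_nonneg (Af_nonneg hQ hP ρ a) _)

lemma Tr_pmf (hQ : IsPMF Q) (hP : IsChannel P) (hρ : -1 < ρ) : IsPMF (Tr ρ Q P) := by
  refine ⟨Tr_nonneg hQ hP ρ, ?_⟩
  unfold Tr
  rw [← Finset.sum_div, ← Sf]
  exact div_self (ne_of_gt (Sf_pos hQ hP hρ))

lemma sum_Jrho_inner (hQ : IsPMF Q) (hP : IsChannel P) (hρ : -1 < ρ) (y : 𝓨) :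
    ∑ x, Jrho ρ Q P x y = Af ρ Q P y ^ (1+ρ) / Sf ρ Q P := by
  have : ∀ x, Jrho ρ Q P x y = Tr ρ Q P y * Vr ρ Q P y x :=
    fun x => (Tr_Vr_eq_Jrho hQ hP hρ x y).symm
  simp_rw [this, ← Finset.mul_sum, sum_Vr hQ hP hρ y, mul_one, Tr]

lemma sum_Jrho (hQ : IsPMF Q) (hP : IsChannel P) (hρ : -1 < ρ) :
    ∑ y, ∑ x, Jrho ρ Q P x y = 1 := by
  simp_rw [sum_Jrho_inner hQ hP hρ]
  rw [← Finset.sum_div, ← Sf]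
  exact div_self (ne_of_gt (Sf_pos hQ hP hρ))

lemma AC_TrVr (hQ : IsPMF Q) (hP : IsChannel P) (hρ : -1 < ρ) :
    ACond Q P (Tr ρ Q P) (Vr ρ Q P) := by
  intro y x h
  rw [Tr_Vr_eq_Jrho hQ hP hρ]
  exact Jrho_eq_zero hQ hP hρ h

end Basic
end ChannelAux

section KeyIneq
variable {𝓧 𝓨 : Type*} [Fintype 𝓧] [Fintype 𝓨]
variable {Q : 𝓧 → ℝ} {P : 𝓧 → 𝓨 → ℝ} {ρ : ℝ} {T : 𝓨 → ℝ} {V : 𝓨 → 𝓧 → ℝ}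

lemma decomp_pointwise (hQ : IsPMF Q) (hP : IsChannel P) (hρ : -1 < ρ)
    (hAC : ACond Q P T V) (x : 𝓧) (y : 𝓨) :
    rterm (T y * V y x) (Q x * P x y) + ρ * rterm (T y * V y x) (T y * Q x)
      = (T y * V y x) * (- Real.log (Sf ρ Q P)) + rterm (T y * V y x) (Jrho ρ Q P x y)
        + ρ * rterm (T y * V y x) (T y * Vr ρ Q P y x) := by
  rcases eq_or_ne (T y * V y x) 0 with hJ|hJ
  · rw [hJ]; simp [rterm_zero]
  · have ht : T y ≠ 0 := left_ne_zero_of_mul hJ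
    have hQP : Q x * P x y ≠ 0 := fun h => hJ (hAC y x h)
    have hq : Q x ≠ 0 := left_ne_zero_of_mul hQP
    have hp : P x y ≠ 0 := right_ne_zero_of_mul hQP
    have hppos : 0 < P x y := ((hP x).1 y).lt_of_ne (Ne.symm hp)
    have hApos : 0 < Af ρ Q P y := Af_pos hQ hP hρ hq hp
    have hSpos : 0 < Sf ρ Q P := Sf_pos hQ hP hρ
    have hpe : P x y ^ (1/(1+ρ)) ≠ 0 := ne_of_gt (Real.rpow_pos_of_pos hppos _)
    have hAρ : Af ρ Q P y ^ ρ ≠ 0 := ne_of_gt (Real.rpow_pos_of_pos hApos _)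
    have hJρ : Jrho ρ Q P x y ≠ 0 := ne_of_gt (Jrho_pos hQ hP hρ hq hp)
    have hVr : Vr ρ Q P y x = Q x * P x y ^ (1/(1+ρ)) / Af ρ Q P y :=
      Vr_eq hQ hP hρ (ne_of_gt hApos)
    have hVrne : Vr ρ Q P y x ≠ 0 := by
      rw [hVr]; exact div_ne_zero (mul_ne_zero hq hpe) (ne_of_gt hApos)
    have hTQ : T y * Q x ≠ 0 := mul_ne_zero ht hq
    have hTVr : T y * Vr ρ Q P y x ≠ 0 := mul_ne_zero ht hVrne
    rw [rterm_of_ne _ hJ, rterm_of_ne _ hJ, rterm_of_ne _ hJ, rterm_of_ne _ hJ]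
    have lp : Real.log (P x y ^ (1/(1+ρ))) = (1/(1+ρ)) * Real.log (P x y) :=
      Real.log_rpow hppos _
    have la : Real.log (Af ρ Q P y ^ ρ) = ρ * Real.log (Af ρ Q P y) :=
      Real.log_rpow hApos _
    have L1 : Real.log (T y * V y x / (Q x * P x y))
        = Real.log (T y * V y x) - Real.log (Q x) - Real.log (P x y) := by
      rw [Real.log_div hJ hQP, Real.log_mul hq hp]; ring
    have L2 : Real.log (T y * V y x / (T y * Q x))
        = Real.log (T y * V y x) - Real.log (T y) - Real.log (Q x) := by
      rw [Real.log_div hJ hTQ, Real.log_mul ht hq]; ring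
    have L3 : Real.log (T y * V y x / Jrho ρ Q P x y)
        = Real.log (T y * V y x) - (Real.log (Q x) + (1/(1+ρ)) * Real.log (P x y)
            + ρ * Real.log (Af ρ Q P y) - Real.log (Sf ρ Q P)) := by
      rw [Real.log_div hJ hJρ, Jrho_def,
        Real.log_div (mul_ne_zero (mul_ne_zero hq hpe) hAρ) (ne_of_gt hSpos),
        Real.log_mul (mul_ne_zero hq hpe) hAρ, Real.log_mul hq hpe, lp, la]
    have L4 : Real.log (T y * V y x / (T y * Vr ρ Q P y x))
        = Real.log (T y * V y x) - (Real.log (T y) + Real.log (Q x)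
            + (1/(1+ρ)) * Real.log (P x y) - Real.log (Af ρ Q P y)) := by
      rw [Real.log_div hJ hTVr, Real.log_mul ht hVrne, hVr,
        Real.log_div (mul_ne_zero hq hpe) (ne_of_gt hApos), Real.log_mul hq hpe, lp]
      ring
    rw [L1, L2, L3, L4]
    have h1ρ : (1:ℝ)+ρ ≠ 0 := ne_of_gt (one_add_pos hρ)
    have he : (1/(1+ρ)) * (1+ρ) = 1 := by
      field_simp
    linear_combination (T y * V y x * Real.log (P x y)) * he

lemma sum_TV (hT : IsPMF T) (hV : IsCondPMF V) : ∑ y, ∑ x, T y * V y x = 1 := by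
  have : ∀ y, ∑ x, T y * V y x = T y := by
    intro y
    rw [← Finset.mul_sum, (hV y).2, mul_one]
  simp_rw [this]
  exact hT.2

lemma decomp (hQ : IsPMF Q) (hP : IsChannel P) (hρ : -1 < ρ)
    (hT : IsPMF T) (hV : IsCondPMF V) (hAC : ACond Q P T V) :
    dqpR T V Q P + ρ * dtqR T V Q
      = E0 ρ Q P + (∑ y, ∑ x, rterm (T y * V y x) (Jrho ρ Q P x y))
        + ρ * ∑ y, ∑ x, rterm (T y * V y x) (T y * Vr ρ Q P y x) := by
  have key : ∑ y, ∑ x, (rterm (T y * V y x) (Q x * P x y)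
        + ρ * rterm (T y * V y x) (T y * Q x))
      = ∑ y, ∑ x, ((T y * V y x) * (- Real.log (Sf ρ Q P))
        + rterm (T y * V y x) (Jrho ρ Q P x y)
        + ρ * rterm (T y * V y x) (T y * Vr ρ Q P y x)) :=
    Finset.sum_congr rfl fun y _ => Finset.sum_congr rfl fun x _ =>
      decomp_pointwise hQ hP hρ hAC x y
  have e1 : ∑ y, ∑ x, (rterm (T y * V y x) (Q x * P x y)
        + ρ * rterm (T y * V y x) (T y * Q x))
      = dqpR T V Q P + ρ * dtqR T V Q := by
    unfold dqpR dtqR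
    simp only [Finset.sum_add_distrib, Finset.mul_sum]
  have e2 : ∑ y, ∑ x, ((T y * V y x) * (- Real.log (Sf ρ Q P))
        + rterm (T y * V y x) (Jrho ρ Q P x y)
        + ρ * rterm (T y * V y x) (T y * Vr ρ Q P y x))
      = E0 ρ Q P + (∑ y, ∑ x, rterm (T y * V y x) (Jrho ρ Q P x y))
        + ρ * ∑ y, ∑ x, rterm (T y * V y x) (T y * Vr ρ Q P y x) := by
    simp only [Finset.sum_add_distrib]
    congr 1
    · congr 1
      · have h1 : ∀ y : 𝓨, ∑ x, T y * V y x * (- Real.log (Sf ρ Q P))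
            = (∑ x, T y * V y x) * (- Real.log (Sf ρ Q P)) :=
          fun y => (Finset.sum_mul _ _ _).symm
        simp_rw [h1]
        rw [← Finset.sum_mul, sum_TV hT hV, one_mul, E0_eq]
    · simp_rw [← Finset.mul_sum]
  rw [← e1, key, e2]

lemma Dj_nonneg (hQ : IsPMF Q) (hP : IsChannel P) (hρ : -1 < ρ)
    (hT : IsPMF T) (hV : IsCondPMF V) (hAC : ACond Q P T V) :
    0 ≤ ∑ y, ∑ x, rterm (T y * V y x) (Jrho ρ Q P x y) := by
  have conv : ∑ y, ∑ x, rterm (T y * V y x) (Jrho ρ Q P x y)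
      = ∑ p : 𝓨 × 𝓧, rterm (T p.1 * V p.1 p.2) (Jrho ρ Q P p.2 p.1) :=
    (Fintype.sum_prod_type
      (f := fun p : 𝓨 × 𝓧 => rterm (T p.1 * V p.1 p.2) (Jrho ρ Q P p.2 p.1))).symm
  rw [conv]
  refine gibbs_nonneg (fun p => mul_nonneg (hT.1 p.1) ((hV p.1).1 p.2))
    (fun p => Jrho_nonneg hQ hP ρ p.2 p.1) ?_ ?_ ?_
  · intro p hp
    have hQP : Q p.2 * P p.2 p.1 ≠ 0 := fun h => hp (hAC p.1 p.2 h)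
    exact ne_of_gt (Jrho_pos hQ hP hρ (left_ne_zero_of_mul hQP) (right_ne_zero_of_mul hQP))
  · rw [Fintype.sum_prod_type]; exact sum_TV hT hV
  · rw [Fintype.sum_prod_type]; exact le_of_eq (sum_Jrho hQ hP hρ)

lemma Dj_eq_zero (hQ : IsPMF Q) (hP : IsChannel P) (hρ : -1 < ρ)
    (hT : IsPMF T) (hV : IsCondPMF V) (hAC : ACond Q P T V)
    (h0 : ∑ y, ∑ x, rterm (T y * V y x) (Jrho ρ Q P x y) = 0) :
    ∀ x y, T y * V y x = Jrho ρ Q P x y := by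
  have conv : ∑ y, ∑ x, rterm (T y * V y x) (Jrho ρ Q P x y)
      = ∑ p : 𝓨 × 𝓧, rterm (T p.1 * V p.1 p.2) (Jrho ρ Q P p.2 p.1) :=
    (Fintype.sum_prod_type
      (f := fun p : 𝓨 × 𝓧 => rterm (T p.1 * V p.1 p.2) (Jrho ρ Q P p.2 p.1))).symm
  rw [conv] at h0
  have := gibbs_eq (a := fun p : 𝓨 × 𝓧 => T p.1 * V p.1 p.2)
    (b := fun p : 𝓨 × 𝓧 => Jrho ρ Q P p.2 p.1)
    (fun p => mul_nonneg (hT.1 p.1) ((hV p.1).1 p.2))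
    (fun p => Jrho_nonneg hQ hP ρ p.2 p.1)
    (fun p hp => by
      have hQP : Q p.2 * P p.2 p.1 ≠ 0 := fun h => hp (hAC p.1 p.2 h)
      exact ne_of_gt (Jrho_pos hQ hP hρ (left_ne_zero_of_mul hQP) (right_ne_zero_of_mul hQP)))
    (by rw [Fintype.sum_prod_type]; exact sum_TV hT hV)
    (by rw [Fintype.sum_prod_type]; exact sum_Jrho hQ hP hρ) h0
  intro x y
  exact this (y, x)

lemma Dc_nonneg (hQ : IsPMF Q) (hP : IsChannel P) (hρ : -1 < ρ)
    (hT : IsPMF T) (hV : IsCondPMF V) (hAC : ACond Q P T V) :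
    0 ≤ ∑ y, ∑ x, rterm (T y * V y x) (T y * Vr ρ Q P y x) := by
  refine Finset.sum_nonneg fun y _ => ?_
  rcases eq_or_ne (T y) 0 with ht|ht
  · refine le_of_eq (Finset.sum_eq_zero fun x _ => ?_).symm
    rw [ht, zero_mul, rterm_zero]
  · have hTpos : 0 < T y := (hT.1 y).lt_of_ne (Ne.symm ht)
    have hrw : ∀ x, rterm (T y * V y x) (T y * Vr ρ Q P y x)
        = T y * rterm (V y x) (Vr ρ Q P y x) := fun x => rterm_mul_left ht
    simp_rw [hrw, ← Finset.mul_sum]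
    refine mul_nonneg hTpos.le (gibbs_nonneg (hV y).1 (Vr_nonneg hQ hP ρ y) ?_ (hV y).2
      (le_of_eq (sum_Vr hQ hP hρ y)))
    intro x hv
    have hJ : T y * V y x ≠ 0 := mul_ne_zero ht hv
    have hQP : Q x * P x y ≠ 0 := fun h => hJ (hAC y x h)
    have hq : Q x ≠ 0 := left_ne_zero_of_mul hQP
    have hp : P x y ≠ 0 := right_ne_zero_of_mul hQP
    have hApos : 0 < Af ρ Q P y := Af_pos hQ hP hρ hq hp
    rw [Vr_eq hQ hP hρ (ne_of_gt hApos)]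
    exact div_ne_zero (mul_ne_zero hq
      (ne_of_gt (Real.rpow_pos_of_pos (((hP x).1 y).lt_of_ne (Ne.symm hp)) _)))
      (ne_of_gt hApos)

lemma key_ineq (hQ : IsPMF Q) (hP : IsChannel P) (hρ0 : 0 ≤ ρ)
    (hT : IsPMF T) (hV : IsCondPMF V) (hAC : ACond Q P T V) :
    E0 ρ Q P ≤ dqpR T V Q P + ρ * dtqR T V Q := by
  have hρ : -1 < ρ := by linarith
  rw [decomp hQ hP hρ hT hV hAC]
  have h1 := Dj_nonneg hQ hP hρ hT hV hAC
  have h2 := Dc_nonneg hQ hP hρ hT hV hAC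
  nlinarith

lemma key_eq (hQ : IsPMF Q) (hP : IsChannel P) (hρ0 : 0 ≤ ρ)
    (hT : IsPMF T) (hV : IsCondPMF V) (hAC : ACond Q P T V)
    (heq : dqpR T V Q P + ρ * dtqR T V Q = E0 ρ Q P) :
    ∀ x y, T y * V y x = Jrho ρ Q P x y := by
  have hρ : -1 < ρ := by linarith
  rw [decomp hQ hP hρ hT hV hAC] at heq
  have h1 := Dj_nonneg hQ hP hρ hT hV hAC
  have h2 := Dc_nonneg hQ hP hρ hT hV hAC
  have h0 : ∑ y, ∑ x, rterm (T y * V y x) (Jrho ρ Q P x y) = 0 := by nlinarith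
  exact Dj_eq_zero hQ hP hρ hT hV hAC h0

lemma value_at (hQ : IsPMF Q) (hP : IsChannel P) (hρ : -1 < ρ) :
    dqpR (Tr ρ Q P) (Vr ρ Q P) Q P + ρ * dtqR (Tr ρ Q P) (Vr ρ Q P) Q = E0 ρ Q P := by
  rw [decomp hQ hP hρ (Tr_pmf hQ hP hρ) (Vr_condPMF hQ hP hρ) (AC_TrVr hQ hP hρ)]
  have h1 : ∑ y, ∑ x, rterm (Tr ρ Q P y * Vr ρ Q P y x) (Jrho ρ Q P x y) = 0 :=
    Finset.sum_eq_zero fun y _ => Finset.sum_eq_zero fun x _ => by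
      rw [Tr_Vr_eq_Jrho hQ hP hρ, rterm_self]
  have h2 : ∑ y, ∑ x, rterm (Tr ρ Q P y * Vr ρ Q P y x) (Tr ρ Q P y * Vr ρ Q P y x) = 0 :=
    Finset.sum_eq_zero fun y _ => Finset.sum_eq_zero fun x _ => rterm_self _
  rw [h1, h2]
  ring

end KeyIneq

section ContPart
variable {𝓧 𝓨 : Type*} [Fintype 𝓧] [Fintype 𝓨]

noncomputable def sG (Q : 𝓧 → ℝ) (P : 𝓧 → 𝓨 → ℝ) (ρ : ℝ) : ℝ :=
  ∑ y, ∑ x, if Q x * P x y = 0 then 0 else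
    Jrho ρ Q P x y * ((1/(1+ρ)) * Real.log (P x y) - Real.log (Af ρ Q P y))

variable {Q : 𝓧 → ℝ} {P : 𝓧 → 𝓨 → ℝ}

lemma sG_eq (hQ : IsPMF Q) (hP : IsChannel P) {ρ : ℝ} (hρ : -1 < ρ) :
    dtqR (Tr ρ Q P) (Vr ρ Q P) Q = sG Q P ρ := by
  unfold dtqR sG
  refine Finset.sum_congr rfl fun y _ => Finset.sum_congr rfl fun x _ => ?_
  rcases eq_or_ne (Q x * P x y) 0 with h|h
  · rw [if_pos h]
    have hz : Tr ρ Q P y * Vr ρ Q P y x = 0 := by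
      rw [Tr_Vr_eq_Jrho hQ hP hρ]; exact Jrho_eq_zero hQ hP hρ h
    rw [hz, rterm_zero]
  · rw [if_neg h]
    have hq : Q x ≠ 0 := left_ne_zero_of_mul h
    have hp : P x y ≠ 0 := right_ne_zero_of_mul h
    have hppos : 0 < P x y := ((hP x).1 y).lt_of_ne (Ne.symm hp)
    have hApos : 0 < Af ρ Q P y := Af_pos hQ hP hρ hq hp
    have hSpos : 0 < Sf ρ Q P := Sf_pos hQ hP hρ
    have hpe : (0:ℝ) < P x y ^ (1/(1+ρ)) := Real.rpow_pos_of_pos hppos _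
    have hT : Tr ρ Q P y ≠ 0 := by
      unfold Tr
      exact ne_of_gt (div_pos (Real.rpow_pos_of_pos hApos _) hSpos)
    have hVr : Vr ρ Q P y x = Q x * P x y ^ (1/(1+ρ)) / Af ρ Q P y :=
      Vr_eq hQ hP hρ (ne_of_gt hApos)
    have hVrne : Vr ρ Q P y x ≠ 0 := by
      rw [hVr]; exact ne_of_gt (div_pos (mul_pos ((hQ.1 x).lt_of_ne (Ne.symm hq)) hpe) hApos)
    rw [rterm_mul_left hT, rterm_of_ne _ hVrne]
    have hdiv : Vr ρ Q P y x / Q x = P x y ^ (1/(1+ρ)) / Af ρ Q P y := by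
      rw [hVr]
      field_simp
    rw [hdiv, Real.log_div (ne_of_gt hpe) (ne_of_gt hApos), Real.log_rpow hppos]
    rw [← mul_assoc, Tr_Vr_eq_Jrho hQ hP hρ]

lemma cont_exp {ρ₀ : ℝ} (h : -1 < ρ₀) : ContinuousAt (fun ρ : ℝ => 1/(1+ρ)) ρ₀ := by
  have h0 : (1:ℝ) + ρ₀ ≠ 0 := ne_of_gt (by linarith)
  exact ContinuousAt.div continuousAt_const (by fun_prop) h0

lemma contAf (hQ : IsPMF Q) (hP : IsChannel P) {ρ₀ : ℝ} (h : -1 < ρ₀) (y : 𝓨) :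
    ContinuousAt (fun ρ => Af ρ Q P y) ρ₀ := by
  have : ContinuousAt (fun ρ => ∑ x, Q x * P x y ^ (1/(1+ρ))) ρ₀ := by
    refine tendsto_finset_sum _ fun x _ => ?_
    rcases eq_or_ne (P x y) 0 with hp|hp
    · have hev : (fun ρ : ℝ => Q x * P x y ^ (1/(1+ρ))) =ᶠ[𝓝 ρ₀] fun _ => 0 := by
        filter_upwards [(isOpen_compl_singleton (x := (-1:ℝ))).mem_nhds
          (by simp; intro hh; rw [hh] at h; linarith)] with ρ hρ
        have h1 : (1:ℝ) + ρ ≠ 0 := by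
          simp only [Set.mem_compl_iff, Set.mem_singleton_iff] at hρ
          intro hc; exact hρ (by linarith)
        rw [hp, Real.zero_rpow (one_div_ne_zero h1), mul_zero]
      exact (continuousAt_congr hev).mpr continuousAt_const
    · have hppos : 0 < P x y := ((hP x).1 y).lt_of_ne (Ne.symm hp)
      exact continuousAt_const.mul
        (ContinuousAt.rpow continuousAt_const (cont_exp h) (Or.inl hp))
  exact this

lemma contSf (hQ : IsPMF Q) (hP : IsChannel P) {ρ₀ : ℝ} (h : -1 < ρ₀) :
    ContinuousAt (fun ρ => Sf ρ Q P) ρ₀ := by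
  refine tendsto_finset_sum _ fun y _ => ?_
  exact ContinuousAt.rpow (contAf hQ hP h y) (by fun_prop) (Or.inr (by simpa using one_add_pos h))

lemma contE0 (hQ : IsPMF Q) (hP : IsChannel P) {ρ₀ : ℝ} (h : -1 < ρ₀) :
    ContinuousAt (fun ρ => E0 ρ Q P) ρ₀ := by
  have hlog : ContinuousAt (fun ρ => Real.log (Sf ρ Q P)) ρ₀ :=
    ContinuousAt.comp (g := Real.log) (x := ρ₀) (f := fun ρ => Sf ρ Q P)
      (Real.continuousAt_log (ne_of_gt (Sf_pos hQ hP h))) (contSf hQ hP h)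
  exact hlog.neg

lemma contsG (hQ : IsPMF Q) (hP : IsChannel P) {ρ₀ : ℝ} (h : -1 < ρ₀) :
    ContinuousAt (fun ρ => sG Q P ρ) ρ₀ := by
  unfold sG
  refine tendsto_finset_sum _ fun y _ => tendsto_finset_sum _ fun x _ => ?_
  rcases eq_or_ne (Q x * P x y) 0 with hqp|hqp
  · simp only [if_pos hqp]
    exact continuousAt_const
  · simp only [if_neg hqp]
    have hq : Q x ≠ 0 := left_ne_zero_of_mul hqp
    have hp : P x y ≠ 0 := right_ne_zero_of_mul hqp
    have hppos : 0 < P x y := ((hP x).1 y).lt_of_ne (Ne.symm hp)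
    have hApos : 0 < Af ρ₀ Q P y := Af_pos hQ hP h hq hp
    have hSpos : 0 < Sf ρ₀ Q P := Sf_pos hQ hP h
    have cJ : ContinuousAt (fun ρ => Jrho ρ Q P x y) ρ₀ := by
      have : ContinuousAt
          (fun ρ => Q x * P x y ^ (1/(1+ρ)) * Af ρ Q P y ^ ρ / Sf ρ Q P) ρ₀ := by
        refine ContinuousAt.div ?_ (contSf hQ hP h) (ne_of_gt hSpos)
        refine ContinuousAt.mul ?_ ?_
        · exact continuousAt_const.mul
            (ContinuousAt.rpow continuousAt_const (cont_exp h) (Or.inl hp))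
        · exact ContinuousAt.rpow (contAf hQ hP h y) continuousAt_id (Or.inl (ne_of_gt hApos))
      exact this
    refine cJ.mul (ContinuousAt.sub ((cont_exp h).mul continuousAt_const) ?_)
    exact ContinuousAt.comp (g := Real.log) (x := ρ₀) (f := fun ρ => Af ρ Q P y)
      (Real.continuousAt_log (ne_of_gt hApos)) (contAf hQ hP h y)

end ContPart

section MaxPart
variable {𝓧 𝓨 : Type*} [Fintype 𝓧] [Fintype 𝓨]
variable {Q : 𝓧 → ℝ} {P : 𝓧 → 𝓨 → ℝ}

lemma exists_rhostar (hQ : IsPMF Q) (hP : IsChannel P) (R : ℝ) :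
    ∃ ρs ∈ Set.Icc (0:ℝ) 1,
      (∀ ρ ∈ Set.Icc (0:ℝ) 1, E0 ρ Q P - ρ * R ≤ E0 ρs Q P - ρs * R) ∧
      max (sG Q P ρs - R) 0 = ρs * (sG Q P ρs - R) := by
  have hg : ContinuousOn (fun ρ => E0 ρ Q P - ρ * R) (Set.Icc (0:ℝ) 1) := by
    intro ρ hρ
    have hρ1 : (-1:ℝ) < ρ := by linarith [hρ.1]
    exact ((contE0 hQ hP hρ1).sub (by fun_prop)).continuousWithinAt
  obtain ⟨ρs, hmem, hmax⟩ :=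
    isCompact_Icc.exists_isMaxOn (Set.nonempty_Icc.mpr zero_le_one) hg
  have hmax' : ∀ ρ ∈ Set.Icc (0:ℝ) 1, E0 ρ Q P - ρ * R ≤ E0 ρs Q P - ρs * R :=
    fun ρ hρ => hmax hρ
  have hρs1 : (-1:ℝ) < ρs := by linarith [hmem.1]
  have hs_le : ∀ ρ ∈ Set.Icc (0:ℝ) 1, ρs < ρ → sG Q P ρ ≤ R := by
    intro ρ hρ hlt
    have hρ1 : (-1:ℝ) < ρ := by linarith [hρ.1]
    have h1 := key_ineq hQ hP hmem.1
      (Tr_pmf hQ hP hρ1) (Vr_condPMF hQ hP hρ1) (AC_TrVr hQ hP hρ1)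
    have h2 := value_at hQ hP hρ1 (Q := Q) (P := P)
    have h3 := hmax' ρ hρ
    have h4 : dtqR (Tr ρ Q P) (Vr ρ Q P) Q = sG Q P ρ := sG_eq hQ hP hρ1
    have h5 : (ρ - ρs) * sG Q P ρ ≤ (ρ - ρs) * R := by nlinarith
    exact le_of_mul_le_mul_left h5 (by linarith)
  have hs_ge : ∀ ρ ∈ Set.Icc (0:ℝ) 1, ρ < ρs → R ≤ sG Q P ρ := by
    intro ρ hρ hlt
    have hρ1 : (-1:ℝ) < ρ := by linarith [hρ.1]
    have h1 := key_ineq hQ hP hmem.1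
      (Tr_pmf hQ hP hρ1) (Vr_condPMF hQ hP hρ1) (AC_TrVr hQ hP hρ1)
    have h2 := value_at hQ hP hρ1 (Q := Q) (P := P)
    have h3 := hmax' ρ hρ
    have h4 : dtqR (Tr ρ Q P) (Vr ρ Q P) Q = sG Q P ρ := sG_eq hQ hP hρ1
    have h5 : (ρs - ρ) * R ≤ (ρs - ρ) * sG Q P ρ := by nlinarith
    exact le_of_mul_le_mul_left h5 (by linarith)
  have hcont : ContinuousAt (sG Q P) ρs := contsG hQ hP hρs1
  have hle : ρs < 1 → sG Q P ρs ≤ R := by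
    intro h1
    have ht : Filter.Tendsto (sG Q P) (𝓝[>] ρs) (𝓝 (sG Q P ρs)) :=
      hcont.continuousWithinAt
    refine le_of_tendsto ht ?_
    filter_upwards [Ioo_mem_nhdsGT_of_mem (Set.mem_Ico.mpr ⟨le_refl ρs, h1⟩)] with ρ hρ
    exact hs_le ρ ⟨by linarith [hmem.1, hρ.1], le_of_lt hρ.2⟩ hρ.1
  have hge : 0 < ρs → R ≤ sG Q P ρs := by
    intro h0
    have ht : Filter.Tendsto (sG Q P) (𝓝[<] ρs) (𝓝 (sG Q P ρs)) :=
      hcont.continuousWithinAt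
    refine ge_of_tendsto ht ?_
    filter_upwards [Ioo_mem_nhdsLT_of_mem (Set.mem_Ioc.mpr ⟨h0, le_refl ρs⟩)] with ρ hρ
    exact hs_ge ρ ⟨le_of_lt hρ.1, by linarith [hmem.2, hρ.2]⟩ hρ.2
  refine ⟨ρs, hmem, hmax', ?_⟩
  by_cases h0 : ρs = 0
  · have hsle : sG Q P ρs ≤ R := hle (by rw [h0]; norm_num)
    rw [h0] at hsle ⊢
    rw [zero_mul]
    exact max_eq_right (by linarith)
  by_cases h1 : ρs = 1
  · have hsge : R ≤ sG Q P ρs := hge (by rw [h1]; norm_num)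
    rw [h1] at hsge ⊢
    rw [one_mul]
    exact max_eq_left (by linarith)
  · have h0' : 0 < ρs := (hmem.1).lt_of_ne (Ne.symm h0)
    have h1' : ρs < 1 := (hmem.2).lt_of_ne h1
    have hs : sG Q P ρs = R := le_antisymm (hle h1') (hge h0')
    rw [hs, sub_self, mul_zero, max_self]
end MaxPart

section ERealGlue
variable {𝓧 𝓨 : Type*} [Fintype 𝓧] [Fintype 𝓨]

noncomputable def coeHomE : ℝ →+ EReal :=
  ⟨⟨Real.toEReal, EReal.coe_zero⟩, fun _ _ => EReal.coe_add _ _⟩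

lemma coeHomE_apply (x : ℝ) : coeHomE x = (x : EReal) := rfl

lemma klTerm_coe {s t : ℝ} (h : s ≠ 0 → t ≠ 0) : klTerm s t = ((rterm s t : ℝ) : EReal) := by
  unfold klTerm rterm
  rcases eq_or_ne s 0 with hs|hs
  · rw [if_pos hs, if_pos hs, EReal.coe_zero]
  · rw [if_neg hs, if_neg hs, if_neg (h hs)]

lemma klTerm_ne_bot (s t : ℝ) : klTerm s t ≠ ⊥ := by
  unfold klTerm
  split_ifs
  · simp
  · simp
  · exact EReal.coe_ne_bot _

lemma coe_sum' {ι : Type*} (s : Finset ι) (f : ι → ℝ) :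
    ((∑ i ∈ s, f i : ℝ) : EReal) = ∑ i ∈ s, ((f i : ℝ) : EReal) :=
  map_sum coeHomE f s

lemma sum_klTerm_ne_bot {ι : Type*} (s : Finset ι) (f g : ι → ℝ) :
    ∑ i ∈ s, klTerm (f i) (g i) ≠ ⊥ := by
  induction s using Finset.cons_induction with
  | empty => simp
  | cons a s ha ih =>
    rw [Finset.sum_cons]
    simp [EReal.add_eq_bot_iff, klTerm_ne_bot, ih]

variable {Q : 𝓧 → ℝ} {P : 𝓧 → 𝓨 → ℝ} {T : 𝓨 → ℝ} {V : 𝓨 → 𝓧 → ℝ}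

lemma DQP_coe (hAC : ACond Q P T V) :
    DQP T V Q P = ((dqpR T V Q P : ℝ) : EReal) := by
  unfold DQP dqpR
  rw [coe_sum']
  refine Finset.sum_congr rfl fun y _ => ?_
  rw [coe_sum']
  refine Finset.sum_congr rfl fun x _ => ?_
  exact klTerm_coe fun hs ht => hs (hAC y x ht)

lemma DTQ_coe (hAC : ACond Q P T V) :
    DTQ T V Q = ((dtqR T V Q : ℝ) : EReal) := by
  unfold DTQ dtqR
  rw [coe_sum']
  refine Finset.sum_congr rfl fun y _ => ?_
  rw [coe_sum']
  refine Finset.sum_congr rfl fun x _ => ?_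
  refine klTerm_coe fun hs ht => hs ?_
  rcases mul_eq_zero.mp ht with h|h
  · rw [h, zero_mul]
  · exact hAC y x (by rw [h, zero_mul])

lemma DQP_top (h : ¬ ACond Q P T V) : DQP T V Q P = ⊤ := by
  classical
  unfold ACond at h
  push_neg at h
  obtain ⟨y0, x0, hqp, htv⟩ := h
  unfold DQP
  have hinner : ∑ x, klTerm (T y0 * V y0 x) (Q x * P x y0) = ⊤ := by
    rw [← Finset.add_sum_erase _ _ (Finset.mem_univ x0)]
    have hterm : klTerm (T y0 * V y0 x0) (Q x0 * P x0 y0) = ⊤ := by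
      unfold klTerm
      rw [if_neg htv, if_pos hqp]
    rw [hterm]
    refine EReal.top_add_of_ne_bot ?_
    induction (Finset.univ.erase x0) using Finset.cons_induction with
    | empty => simp
    | cons a s ha ih =>
      rw [Finset.sum_cons]
      simp [EReal.add_eq_bot_iff, klTerm_ne_bot, ih]
  rw [← Finset.add_sum_erase _ _ (Finset.mem_univ y0), hinner]
  refine EReal.top_add_of_ne_bot ?_
  induction (Finset.univ.erase y0) using Finset.cons_induction with
  | empty => simp
  | cons a s ha ih =>
    rw [Finset.sum_cons]
    simp [EReal.add_eq_bot_iff, sum_klTerm_ne_bot, ih]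

lemma coe_val (R dq dt : ℝ) :
    ((dq + max (dt - R) 0 : ℝ) : EReal) = (dq:EReal) + max ((dt:EReal) - (R:EReal)) 0 := by
  have h1 : ((max (dt - R) 0 : ℝ) : EReal) = max ((dt - R : ℝ) : EReal) ((0:ℝ):EReal) :=
    EReal.coe_strictMono.monotone.map_max
  rw [EReal.coe_add, h1, EReal.coe_sub, EReal.coe_zero]

end ERealGlue

theorem stmt_4 {𝓧 𝓨 : Type*} [Fintype 𝓧] [Fintype 𝓨] [Nonempty 𝓧] [Nonempty 𝓨]
    (P : 𝓧 → 𝓨 → ℝ) (hP : IsChannel P) (Q : 𝓧 → ℝ) (hQ : IsPMF Q) (R : ℝ) :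
    Ee R Q P
      = ((sSup {e : ℝ | ∃ ρ ∈ Set.Icc (0 : ℝ) 1, e = E0 ρ Q P - ρ * R} : ℝ) : EReal)
    ∧ ∃ ρ ∈ Set.Icc (0 : ℝ) 1,
        E0 ρ Q P - ρ * R
          = sSup {e : ℝ | ∃ ρ' ∈ Set.Icc (0 : ℝ) 1, e = E0 ρ' Q P - ρ' * R}
        ∧ (∃ T : 𝓨 → ℝ, ∃ V : 𝓨 → 𝓧 → ℝ, IsPMF T ∧ IsCondPMF V ∧
            DQP T V Q P + max (DTQ T V Q - (R : EReal)) 0 = Ee R Q P ∧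
            ∀ x y, T y * V y x = Jrho ρ Q P x y)
        ∧ (∀ (T : 𝓨 → ℝ) (V : 𝓨 → 𝓧 → ℝ), IsPMF T → IsCondPMF V →
            DQP T V Q P + max (DTQ T V Q - (R : EReal)) 0 = Ee R Q P →
            ∀ x y, T y * V y x = Jrho ρ Q P x y) := by
  obtain ⟨ρs, hmem, hmax, hkkt⟩ := exists_rhostar hQ hP R
  have hρs1 : (-1:ℝ) < ρs := by linarith [hmem.1]
  have hSup : sSup {e : ℝ | ∃ ρ' ∈ Set.Icc (0:ℝ) 1, e = E0 ρ' Q P - ρ' * R}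
      = E0 ρs Q P - ρs * R := by
    apply IsGreatest.csSup_eq
    constructor
    · exact ⟨ρs, hmem, rfl⟩
    · rintro e ⟨ρ, hρ, rfl⟩
      exact hmax ρ hρ
  have hTpmf := Tr_pmf hQ hP hρs1
  have hVpmf := Vr_condPMF hQ hP hρs1
  have hACs := AC_TrVr hQ hP hρs1
  -- real value of the candidate
  have h2 := value_at hQ hP hρs1 (Q := Q) (P := P)
  have h4 : dtqR (Tr ρs Q P) (Vr ρs Q P) Q = sG Q P ρs := sG_eq hQ hP hρs1
  have hval : dqpR (Tr ρs Q P) (Vr ρs Q P) Q P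
      + max (dtqR (Tr ρs Q P) (Vr ρs Q P) Q - R) 0 = E0 ρs Q P - ρs * R := by
    rw [h4, hkkt]
    nlinarith [h2, h4]
  -- EReal value of the candidate
  have hvalE : DQP (Tr ρs Q P) (Vr ρs Q P) Q P
      + max (DTQ (Tr ρs Q P) (Vr ρs Q P) Q - (R:EReal)) 0
      = ((E0 ρs Q P - ρs * R : ℝ) : EReal) := by
    rw [DQP_coe hACs, DTQ_coe hACs, ← coe_val, hval]
  -- ρs·(t−R) ≤ max (t−R) 0 for t real
  have hmaxbound : ∀ t : ℝ, ρs * (t - R) ≤ max (t - R) 0 := by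
    intro t
    rcases le_total (t - R) 0 with h|h
    · exact le_trans (mul_nonpos_iff.mpr (Or.inl ⟨hmem.1, h⟩)) (le_max_right _ _)
    · refine le_trans ?_ (le_max_left _ _)
      nlinarith [hmem.2]
  -- lower bound
  have hlb : ((E0 ρs Q P - ρs * R : ℝ) : EReal) ≤ Ee R Q P := by
    refine le_sInf ?_
    rintro v ⟨T, V, hT, hV, rfl⟩
    by_cases hAC : ACond Q P T V
    · rw [DQP_coe hAC, DTQ_coe hAC, ← coe_val]
      apply EReal.coe_le_coe_iff.mpr
      have h1 := key_ineq hQ hP hmem.1 hT hV hAC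
      have h3 := hmaxbound (dtqR T V Q)
      nlinarith
    · rw [DQP_top hAC]
      rw [EReal.top_add_of_ne_bot
        (ne_of_gt (lt_of_lt_of_le EReal.bot_lt_zero (le_max_right _ _)))]
      exact le_top
  have hub : Ee R Q P ≤ ((E0 ρs Q P - ρs * R : ℝ) : EReal) :=
    le_of_le_of_eq (sInf_le ⟨Tr ρs Q P, Vr ρs Q P, hTpmf, hVpmf, rfl⟩) hvalE
  have hEe : Ee R Q P = ((E0 ρs Q P - ρs * R : ℝ) : EReal) := le_antisymm hub hlb
  constructor
  · rw [hEe, hSup]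
  · refine ⟨ρs, hmem, hSup.symm, ?_, ?_⟩
    · exact ⟨Tr ρs Q P, Vr ρs Q P, hTpmf, hVpmf, by rw [hvalE, hEe],
        fun x y => Tr_Vr_eq_Jrho hQ hP hρs1 x y⟩
    · intro T V hT hV hval' x y
      by_cases hAC : ACond Q P T V
      · rw [DQP_coe hAC, DTQ_coe hAC, ← coe_val, hEe] at hval'
        have hre : dqpR T V Q P + max (dtqR T V Q - R) 0 = E0 ρs Q P - ρs * R :=
          EReal.coe_eq_coe_iff.mp hval'
        have h1 := key_ineq hQ hP hmem.1 hT hV hAC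
        have h3 := hmaxbound (dtqR T V Q)
        have heq : dqpR T V Q P + ρs * dtqR T V Q = E0 ρs Q P := by nlinarith
        exact key_eq hQ hP hmem.1 hT hV hAC heq x y
      · rw [DQP_top hAC, EReal.top_add_of_ne_bot
          (ne_of_gt (lt_of_lt_of_le EReal.bot_lt_zero (le_max_right _ _))), hEe] at hval'
        exact absurd hval' (EReal.top_ne_coe _)
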